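/- Let U : Δ → Δ be an expanding Young tower with μ(Δ_n) ≤ C·ρⁿ for some ρ < 1. Let φ be the first return time to the basis Δ₀ and U₀ the induced map on Δ₀. Then for every sufficiently small κ > 0 there exist C' > 0 and θ < 1 such that for all n ∈ ℕ, μ({x ∈ Δ₀ : ∑_{0 ≤ i ≤ κ·n} φ(U₀^i x) ≥ n/2}) ≤ C'·θⁿ. -/

import Mathlib

open MeasureTheory Filter Set
open scoped ENNReal NNReal Topology Classical

/-- A function `f : ℝ → ℝ` is slowly varying if `f (λ x) / f x → 1` as `x → ∞`,
for every `λ > 0`. -/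
def SlowlyVarying (f : ℝ → ℝ) : Prop :=
  ∀ lam : ℝ, 0 < lam → Filter.Tendsto (fun x => f (lam * x) / f x) Filter.atTop (nhds 1)

/-- An expanding Young tower on a probability space `(Δ, μ)`, for the map `U`. -/
structure YoungTower {Δ : Type*} [MeasurableSpace Δ] (μ : Measure Δ) (U : Δ → Δ) where
  /-- the height of column `p` -/
  r : ℕ → ℕ
  r_pos : ∀ p, 0 < r p
  /-- `cell k p` is the element `Δ_{k,p}` of the partition -/
  cell : ℕ → ℕ → Set Δ
  cell_meas : ∀ k p, MeasurableSet (cell k p)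
  cell_empty : ∀ k p, r p ≤ k → cell k p = ∅
  cell_cover : ∀ x : Δ, ∃ p k, k < r p ∧ x ∈ cell k p
  cell_disj : ∀ k p k' p', (k, p) ≠ (k', p') → Disjoint (cell k p) (cell k' p')
  measurable_U : Measurable U
  measurePreserving_U : MeasurePreserving U μ μ
  isProb : IsProbabilityMeasure μ
  /-- `U` is a measurable isomorphism from `Δ_{k,p}` onto `Δ_{k+1,p}` when `k < r p - 1`... -/
  map_up : ∀ p k, k + 1 < r p → Set.BijOn U (cell k p) (cell (k + 1) p)
  /-- ... which is measure preserving -/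
  map_up_measure : ∀ p k, k + 1 < r p → ∀ A : Set Δ, A ⊆ cell k p → MeasurableSet A →
      μ (U '' A) = μ A
  /-- `U` is a measurable isomorphism from `Δ_{r_p - 1, p}` onto the basis `⋃ m, Δ_{0,m}` -/
  map_top : ∀ p, Set.BijOn U (cell (r p - 1) p) (⋃ m, cell 0 m)
  /-- the height function `ω` -/
  height : Δ → ℕ
  height_spec : ∀ k p, ∀ x ∈ cell k p, height x = k
  /-- the projection `π₀` to the basis -/
  proj : Δ → Δ
  proj_spec : ∀ k p, ∀ x ∈ cell k p, proj x ∈ cell 0 p ∧ U^[k] (proj x) = x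
  /-- the separation time -/
  s : Δ → Δ → ℕ
  s_eq_zero : ∀ x y : Δ, (¬ ∃ p k, k < r p ∧ x ∈ cell k p ∧ y ∈ cell k p) → s x y = 0
  s_mid : ∀ p k, k + 1 < r p → ∀ x ∈ cell k p, ∀ y ∈ cell k p, s x y = s (U x) (U y)
  s_top : ∀ p, ∀ x ∈ cell (r p - 1) p, ∀ y ∈ cell (r p - 1) p, s x y = 1 + s (U x) (U y)
  /-- the inverse of the Jacobian of `U` -/
  J : Δ → ℝ
  J_meas : Measurable J
  J_pos : ∀ x, 0 < J x
  J_spec : ∀ k p, ∀ A : Set Δ, A ⊆ cell k p → MeasurableSet A →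
      μ (U '' A) = ∫⁻ x in A, ENNReal.ofReal (J x)⁻¹ ∂μ
  /-- distortion constants -/
  Cd : ℝ
  β : ℝ
  Cd_pos : 0 < Cd
  β_pos : 0 < β
  β_lt_one : β < 1
  distortion : ∀ k p, ∀ x ∈ cell k p, ∀ y ∈ cell k p,
      |1 - J x / J y| ≤ Cd * β ^ (s (U x) (U y))

namespace YoungTower

variable {Δ : Type*} [MeasurableSpace Δ] {μ : Measure Δ} {U : Δ → Δ}

/-- The basis `Δ₀` of the tower. -/
def base (T : YoungTower μ U) : Set Δ := ⋃ m, T.cell 0 m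

/-- The set `Δ_n` of points at height `n`. -/
def level (T : YoungTower μ U) (n : ℕ) : Set Δ := ⋃ p, T.cell n p

/-- Exponentially small tails: `μ (Δ_n) ≤ C ρ^n`. -/
def ExpTails (T : YoungTower μ U) (C ρ : ℝ) : Prop :=
  ∀ n : ℕ, μ (T.level n) ≤ ENNReal.ofReal (C * ρ ^ n)

/-- `x` and `y` lie in the same element of the partition. -/
def SameCell (T : YoungTower μ U) (x y : Δ) : Prop :=
  ∃ p k, k < T.r p ∧ x ∈ T.cell k p ∧ y ∈ T.cell k p

/-- A function is locally Hölder (with constants `Cg`, `τ`) if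
`|g x - g y| ≤ Cg τ^(s x y)` for `x, y` in the same partition element. -/
def LocallyHolder (T : YoungTower μ U) (g : Δ → ℝ) (Cg τ : ℝ) : Prop :=
  ∀ x y : Δ, T.SameCell x y → |g x - g y| ≤ Cg * τ ^ (T.s x y)

/-- The first return time to the basis. -/
noncomputable def retTime (T : YoungTower μ U) (x : Δ) : ℕ :=
  sInf {n : ℕ | 0 < n ∧ U^[n] x ∈ T.base}

/-- The induced (first return) map on the basis. -/
noncomputable def retMap (T : YoungTower μ U) (x : Δ) : Δ := U^[T.retTime x] x

/-- `Ψ_n x`: the number of returns of `x` to the basis between times `1` and `n`. -/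
noncomputable def retCount (T : YoungTower μ U) (n : ℕ) (x : Δ) : ℕ :=
  ((Finset.Icc 1 n).filter fun k => U^[k] x ∈ T.base).card

/-- `G x = ∑_{j=0}^{ω(x)-1} g (U^j (π₀ x))`. -/
noncomputable def towerSum (T : YoungTower μ U) (g : Δ → ℝ) (x : Δ) : ℝ :=
  ∑ j ∈ Finset.range (T.height x), g (U^[j] (T.proj x))

/-- The transfer operator `Û u (x) = ∑_{U y = x} J y · u y`. -/
noncomputable def transfer (T : YoungTower μ U) (u : Δ → ℂ) (x : Δ) : ℂ :=
  ∑' y : {y : Δ // U y = x}, (T.J y.1 : ℂ) * u y.1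

/-- The perturbed transfer operator `Û_t u = Û (e^{itg} u)`. -/
noncomputable def transferPert (T : YoungTower μ U) (g : Δ → ℝ) (t : ℝ) (u : Δ → ℂ) :
    Δ → ℂ :=
  T.transfer fun y => Complex.exp (Complex.I * t * g y) * u y

/-- The weighted sup norm `‖u‖_m`. -/
noncomputable def normM (T : YoungTower μ U) (ε : ℝ) (u : Δ → ℂ) : ℝ≥0∞ :=
  sInf {C : ℝ≥0∞ | ∀ n : ℕ, ∀ᵐ x ∂μ, x ∈ T.level n →
    (‖u x‖₊ : ℝ≥0∞) ≤ C * ENNReal.ofReal (Real.exp (ε * n))}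

/-- The weighted Hölder seminorm `‖u‖_l`. -/
noncomputable def normL (T : YoungTower μ U) (ε τ : ℝ) (u : Δ → ℂ) : ℝ≥0∞ :=
  sInf {C : ℝ≥0∞ | ∀ n : ℕ, ∀ᵐ x ∂μ, ∀ᵐ y ∂μ,
    (x ∈ T.level n ∧ T.SameCell x y) →
    (‖u x - u y‖₊ : ℝ≥0∞) ≤ C * ENNReal.ofReal (Real.exp (ε * n) * τ ^ (T.s x y))}

/-- The norm `‖u‖ = ‖u‖_m + ‖u‖_l` of the Banach space `H`. -/
noncomputable def normH (T : YoungTower μ U) (ε τ : ℝ) (u : Δ → ℂ) : ℝ≥0∞ :=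
  T.normM ε u + T.normL ε τ u

/-- Membership in the Banach space `H`. -/
def MemH (T : YoungTower μ U) (ε τ : ℝ) (u : Δ → ℂ) : Prop :=
  Measurable u ∧ T.normH ε τ u < ⊤

end YoungTower

namespace YoungTower

variable {Δ : Type*} [MeasurableSpace Δ] {μ : Measure Δ} {U : Δ → Δ} (T : YoungTower μ U)

lemma measurableSet_base : MeasurableSet T.base :=
  MeasurableSet.iUnion fun m => T.cell_meas 0 m

lemma measurableSet_level (n : ℕ) : MeasurableSet (T.level n) :=
  MeasurableSet.iUnion fun p => T.cell_meas n p

lemma iter_mem_cell {p k : ℕ} {x : Δ} (hx : x ∈ T.cell k p) :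
    ∀ j, k + j < T.r p → U^[j] x ∈ T.cell (k + j) p := by
  intro j
  induction j with
  | zero => intro _; simpa using hx
  | succ j ih =>
    intro hj
    have hj' : k + j + 1 < T.r p := by omega
    have h1 : U^[j] x ∈ T.cell (k + j) p := ih (by omega)
    have h2 := (T.map_up p (k + j) hj').mapsTo h1
    rw [Function.iterate_succ_apply']
    exact h2

lemma top_step {p : ℕ} {x : Δ} (hx : x ∈ T.cell (T.r p - 1) p) : U x ∈ T.base :=
  (T.map_top p).mapsTo hx

lemma returns (x : Δ) : ∃ n, 0 < n ∧ U^[n] x ∈ T.base := by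
  obtain ⟨p, k, hk, hx⟩ := T.cell_cover x
  refine ⟨T.r p - k, by omega, ?_⟩
  have heq : k + (T.r p - 1 - k) = T.r p - 1 := by omega
  have h1 := T.iter_mem_cell hx (T.r p - 1 - k) (by omega)
  rw [heq] at h1
  have h2 : U^[T.r p - k] x = U (U^[T.r p - 1 - k] x) := by
    rw [← Function.iterate_succ_apply' U (T.r p - 1 - k) x]
    congr 1
    omega
  rw [h2]
  exact T.top_step h1

lemma retTime_spec (x : Δ) : 0 < T.retTime x ∧ U^[T.retTime x] x ∈ T.base :=
  Nat.sInf_mem (T.returns x)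

lemma retTime_pos (x : Δ) : 0 < T.retTime x := (T.retTime_spec x).1

lemma retMap_mem_base (x : Δ) : T.retMap x ∈ T.base := (T.retTime_spec x).2

lemma not_base_of_lt_retTime {x : Δ} {k : ℕ} (h0 : 0 < k) (hk : k < T.retTime x) :
    U^[k] x ∉ T.base := fun hb => Nat.notMem_of_lt_sInf hk ⟨h0, hb⟩

lemma not_base_of_cell {p k : ℕ} (hk : k ≠ 0) {x : Δ} (hx : x ∈ T.cell k p) :
    x ∉ T.base := by
  intro hb
  obtain ⟨m, hm⟩ : ∃ m, x ∈ T.cell 0 m := by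
    simpa [YoungTower.base, Set.mem_iUnion] using hb
  exact (T.cell_disj k p 0 m (by simp [hk])).ne_of_mem hx hm rfl

lemma retTime_eq {p : ℕ} {x : Δ} (hx : x ∈ T.cell 0 p) : T.retTime x = T.r p := by
  have hrp := T.r_pos p
  have hmem : T.r p ∈ {n : ℕ | 0 < n ∧ U^[n] x ∈ T.base} := by
    have h1 := T.iter_mem_cell hx (T.r p - 1) (by omega)
    rw [Nat.zero_add] at h1
    have h2 : U^[T.r p] x = U (U^[T.r p - 1] x) := by
      rw [← Function.iterate_succ_apply' U (T.r p - 1) x]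
      congr 1
      omega
    exact ⟨hrp, by rw [h2]; exact T.top_step h1⟩
  have hle : T.retTime x ≤ T.r p := Nat.sInf_le hmem
  rcases Nat.lt_or_ge (T.retTime x) (T.r p) with h | h
  · exfalso
    have h0 := T.retTime_pos x
    have h1 := T.iter_mem_cell hx (T.retTime x) (by omega)
    rw [Nat.zero_add] at h1
    exact T.not_base_of_cell (by omega) h1 (T.retTime_spec x).2
  · omega

lemma retMap_eq {p : ℕ} {x : Δ} (hx : x ∈ T.cell 0 p) : T.retMap x = U^[T.r p] x := by
  rw [YoungTower.retMap, T.retTime_eq hx]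

lemma measurable_retTime : Measurable T.retTime := by
  apply measurable_to_countable'
  intro n
  have hS : ∀ k : ℕ, MeasurableSet ((U^[k]) ⁻¹' T.base) := fun k =>
    T.measurableSet_base.preimage (T.measurable_U.iterate k)
  rcases n with _ | n
  · have h : T.retTime ⁻¹' {0} = ∅ := by
      ext x
      simp only [Set.mem_preimage, Set.mem_singleton_iff, Set.mem_empty_iff_false, iff_false]
      exact fun h => absurd h (by have := T.retTime_pos x; omega)
    rw [h]
    exact MeasurableSet.empty
  · have h : T.retTime ⁻¹' {n + 1}
        = (U^[n + 1]) ⁻¹' T.base ∩ ⋂ k ∈ Set.Ioo 0 (n + 1), ((U^[k]) ⁻¹' T.base)ᶜ := by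
      ext x
      simp only [Set.mem_preimage, Set.mem_singleton_iff, Set.mem_inter_iff, Set.mem_iInter,
        Set.mem_Ioo, Set.mem_compl_iff]
      constructor
      · rintro hret
        refine ⟨by rw [← hret]; exact (T.retTime_spec x).2, fun k hk => ?_⟩
        exact T.not_base_of_lt_retTime hk.1 (by omega)
      · rintro ⟨h1, h2⟩
        have hle : T.retTime x ≤ n + 1 := Nat.sInf_le ⟨Nat.succ_pos n, h1⟩
        have hmem := T.retTime_spec x
        rcases Nat.lt_or_ge (T.retTime x) (n + 1) with h | h
        · exact absurd hmem.2 (h2 _ ⟨hmem.1, h⟩)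
        · omega
    rw [h]
    exact (hS (n + 1)).inter
      (MeasurableSet.biInter (Set.to_countable _) fun k _ => (hS k).compl)

lemma measurable_retMap : Measurable T.retMap := by
  intro s hs
  have h : T.retMap ⁻¹' s = ⋃ n, (T.retTime ⁻¹' {n} ∩ (U^[n]) ⁻¹' s) := by
    ext x
    simp only [Set.mem_preimage, Set.mem_iUnion, Set.mem_inter_iff, Set.mem_singleton_iff,
      YoungTower.retMap]
    constructor
    · intro hmem
      exact ⟨T.retTime x, rfl, hmem⟩
    · rintro ⟨n, hn, hmem⟩
      rw [hn]
      exact hmem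
  rw [h]
  exact MeasurableSet.iUnion fun n =>
    (T.measurable_retTime (measurableSet_singleton n)).inter
      (hs.preimage (T.measurable_U.iterate n))

lemma measure_preimage_up {p k : ℕ} (hk : k + 1 < T.r p) {B : Set Δ}
    (hB : MeasurableSet B) (hBc : B ⊆ T.cell (k + 1) p) :
    μ ((U ⁻¹' B) ∩ T.cell k p) = μ B := by
  have hA : MeasurableSet ((U ⁻¹' B) ∩ T.cell k p) :=
    (hB.preimage T.measurable_U).inter (T.cell_meas k p)
  have him : U '' ((U ⁻¹' B) ∩ T.cell k p) = B := by
    apply Set.Subset.antisymm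
    · rintro _ ⟨x, ⟨hxB, _⟩, rfl⟩
      exact hxB
    · intro b hb
      obtain ⟨x, hx, rfl⟩ := (T.map_up p k hk).surjOn (hBc hb)
      exact ⟨x, ⟨hb, hx⟩, rfl⟩
  calc μ (U ⁻¹' B ∩ T.cell k p)
      = μ (U '' (U ⁻¹' B ∩ T.cell k p)) :=
        (T.map_up_measure p k hk _ Set.inter_subset_right hA).symm
    _ = μ B := by rw [him]

lemma measure_preimage_iter {p : ℕ} : ∀ j, j < T.r p → ∀ B : Set Δ,
    MeasurableSet B → B ⊆ T.cell j p →
    μ ((U^[j] ⁻¹' B) ∩ T.cell 0 p) = μ B := by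
  intro j
  induction j with
  | zero =>
    intro _ B _ hBc
    simp only [Function.iterate_zero, Set.preimage_id]
    rw [Set.inter_eq_self_of_subset_left hBc]
  | succ j ih =>
    intro hj B hB hBc
    have key : (U^[j + 1] ⁻¹' B) ∩ T.cell 0 p
        = (U^[j] ⁻¹' ((U ⁻¹' B) ∩ T.cell j p)) ∩ T.cell 0 p := by
      ext x
      simp only [Set.mem_inter_iff, Set.mem_preimage, Function.iterate_succ_apply']
      constructor
      · rintro ⟨h1, h2⟩
        have h3 := T.iter_mem_cell h2 j (by omega)
        rw [Nat.zero_add] at h3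
        exact ⟨⟨h1, h3⟩, h2⟩
      · rintro ⟨⟨h1, _⟩, h2⟩
        exact ⟨h1, h2⟩
    rw [key, ih (by omega) _ ((hB.preimage T.measurable_U).inter (T.cell_meas j p))
      Set.inter_subset_right, T.measure_preimage_up hj hB hBc]

lemma measure_cell_eq {p j : ℕ} (hj : j < T.r p) : μ (T.cell j p) = μ (T.cell 0 p) := by
  have h := T.measure_preimage_iter j hj (T.cell j p) (T.cell_meas j p) Set.Subset.rfl
  have hsub : T.cell 0 p ⊆ U^[j] ⁻¹' T.cell j p := by
    intro x hx
    have h1 := T.iter_mem_cell hx j (by omega)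
    rwa [Nat.zero_add] at h1
  rw [Set.inter_eq_self_of_subset_right hsub] at h
  exact h.symm

lemma base_pos : 0 < μ T.base := by
  haveI := T.isProb
  by_contra h
  push_neg at h
  have hb0 : μ T.base = 0 := le_antisymm h zero_le
  have hcell : ∀ p k, μ (T.cell k p) = 0 := by
    intro p k
    rcases Nat.lt_or_ge k (T.r p) with hk | hk
    · rw [T.measure_cell_eq hk]
      exact measure_mono_null (Set.subset_iUnion (fun m => T.cell 0 m) p) hb0
    · rw [T.cell_empty k p hk]
      exact measure_empty
  have hcover : (Set.univ : Set Δ) ⊆ ⋃ p, ⋃ k, T.cell k p := by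
    intro x _
    obtain ⟨p, k, _, hx⟩ := T.cell_cover x
    exact Set.mem_iUnion.2 ⟨p, Set.mem_iUnion.2 ⟨k, hx⟩⟩
  have huniv : μ Set.univ = 0 :=
    measure_mono_null hcover
      (measure_iUnion_null fun p => measure_iUnion_null fun k => hcell p k)
  simp [measure_univ] at huniv

lemma J_comparable {p : ℕ} {y z : Δ} (hy : y ∈ T.cell (T.r p - 1) p)
    (hz : z ∈ T.cell (T.r p - 1) p) : T.J y ≤ (1 + T.Cd) * T.J z := by
  have h := T.distortion (T.r p - 1) p y hy z hz
  have hb : T.β ^ T.s (U y) (U z) ≤ 1 := pow_le_one₀ T.β_pos.le T.β_lt_one.le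
  have hCd := T.Cd_pos
  have h2 : |1 - T.J y / T.J z| ≤ T.Cd := by
    refine h.trans ?_
    nlinarith
  have h3 : T.J y / T.J z ≤ 1 + T.Cd := by
    have := abs_le.mp h2
    linarith [this.1]
  have hz0 := T.J_pos z
  calc T.J y = T.J y / T.J z * T.J z := by field_simp
    _ ≤ (1 + T.Cd) * T.J z := mul_le_mul_of_nonneg_right h3 hz0.le

lemma one_step (p : ℕ) {F : Set Δ} (hF : MeasurableSet F) (hFb : F ⊆ T.base) :
    μ (T.cell 0 p ∩ T.retMap ⁻¹' F) * μ T.base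
      ≤ ENNReal.ofReal ((1 + T.Cd) ^ 2) * μ (T.cell 0 p) * μ F := by
  rcases Set.eq_empty_or_nonempty (T.cell 0 p) with h0 | ⟨x₀, hx₀⟩
  · simp [h0]
  have hn1 : 1 ≤ T.r p := T.r_pos p
  set n := T.r p with hn
  set c := T.cell (n - 1) p with hc
  have hcm : MeasurableSet c := T.cell_meas _ _
  have hy₀ : U^[n - 1] x₀ ∈ c := by
    have h1 := T.iter_mem_cell hx₀ (n - 1) (by omega)
    rwa [Nat.zero_add] at h1
  set y₀ := U^[n - 1] x₀ with hy₀def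
  set B := (U ⁻¹' F) ∩ c with hB
  have hBm : MeasurableSet B := (hF.preimage T.measurable_U).inter hcm
  have hretMapeq : ∀ x ∈ T.cell 0 p, T.retMap x = U (U^[n - 1] x) := by
    intro x hx
    rw [T.retMap_eq hx, ← Function.iterate_succ_apply' U (n - 1) x]
    congr 1
    omega
  have hset : T.cell 0 p ∩ T.retMap ⁻¹' F = (U^[n - 1] ⁻¹' B) ∩ T.cell 0 p := by
    ext x
    simp only [Set.mem_inter_iff, Set.mem_preimage, hB]
    constructor
    · rintro ⟨hx, hxF⟩
      have hxc : U^[n - 1] x ∈ c := by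
        have h1 := T.iter_mem_cell hx (n - 1) (by omega)
        rwa [Nat.zero_add] at h1
      rw [hretMapeq x hx] at hxF
      exact ⟨⟨hxF, hxc⟩, hx⟩
    · rintro ⟨⟨hUF, _⟩, hx⟩
      refine ⟨hx, ?_⟩
      rw [hretMapeq x hx]
      exact hUF
  have hμB : μ (T.cell 0 p ∩ T.retMap ⁻¹' F) = μ B := by
    rw [hset]
    exact T.measure_preimage_iter (n - 1) (by omega) B hBm Set.inter_subset_right
  have hUB : U '' B = F := by
    apply Set.Subset.antisymm
    · rintro _ ⟨x, ⟨hxF, _⟩, rfl⟩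
      exact hxF
    · intro f hf
      obtain ⟨y, hy, rfl⟩ := (T.map_top p).surjOn (hFb hf)
      exact ⟨y, ⟨hf, hy⟩, rfl⟩
  have hUc : U '' c = T.base := (T.map_top p).image_eq
  have hFint : μ F = ∫⁻ x in B, ENNReal.ofReal (T.J x)⁻¹ ∂μ := by
    rw [← hUB]
    exact T.J_spec (n - 1) p B Set.inter_subset_right hBm
  have hbint : μ T.base = ∫⁻ x in c, ENNReal.ofReal (T.J x)⁻¹ ∂μ := by
    rw [← hUc]
    exact T.J_spec (n - 1) p c Set.Subset.rfl hcm
  have hCd := T.Cd_pos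
  have hJy₀ := T.J_pos y₀
  have hJmeas : Measurable fun x => ENNReal.ofReal (T.J x)⁻¹ :=
    (T.J_meas.inv).ennreal_ofReal
  have hlow : ENNReal.ofReal ((1 + T.Cd) * T.J y₀)⁻¹ * μ B ≤ μ F := by
    rw [hFint, ← setLIntegral_const B (ENNReal.ofReal ((1 + T.Cd) * T.J y₀)⁻¹)]
    apply setLIntegral_mono hJmeas
    intro x hx
    apply ENNReal.ofReal_le_ofReal
    rw [inv_le_inv₀ (by positivity) (T.J_pos x)]
    exact T.J_comparable hx.2 hy₀
  have hupp : μ T.base ≤ ENNReal.ofReal ((1 + T.Cd) * (T.J y₀)⁻¹) * μ (T.cell 0 p) := by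
    rw [hbint, ← T.measure_cell_eq (show n - 1 < T.r p by omega), ← hc,
      ← setLIntegral_const c (ENNReal.ofReal ((1 + T.Cd) * (T.J y₀)⁻¹))]
    apply setLIntegral_mono (by fun_prop)
    intro x hx
    apply ENNReal.ofReal_le_ofReal
    have hJx := T.J_pos x
    have h := T.J_comparable hy₀ hx
    rw [show (1 + T.Cd) * (T.J y₀)⁻¹ = (1 + T.Cd) / T.J y₀ by ring,
      show (T.J x)⁻¹ = 1 / T.J x by ring, div_le_div_iff₀ hJx hJy₀]
    linarith
  have h1 : μ B ≤ ENNReal.ofReal ((1 + T.Cd) * T.J y₀) * μ F := by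
    calc μ B = ENNReal.ofReal ((1 + T.Cd) * T.J y₀)
          * (ENNReal.ofReal ((1 + T.Cd) * T.J y₀)⁻¹ * μ B) := by
          rw [← mul_assoc, ← ENNReal.ofReal_mul (by positivity),
            mul_inv_cancel₀ (by positivity), ENNReal.ofReal_one, one_mul]
      _ ≤ ENNReal.ofReal ((1 + T.Cd) * T.J y₀) * μ F := mul_le_mul_right hlow _
  rw [hμB]
  calc μ B * μ T.base
      ≤ ENNReal.ofReal ((1 + T.Cd) * T.J y₀) * μ F
        * (ENNReal.ofReal ((1 + T.Cd) * (T.J y₀)⁻¹) * μ (T.cell 0 p)) :=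
        mul_le_mul' h1 hupp
    _ = ENNReal.ofReal ((1 + T.Cd) * T.J y₀) * ENNReal.ofReal ((1 + T.Cd) * (T.J y₀)⁻¹)
        * μ (T.cell 0 p) * μ F := by ring
    _ = ENNReal.ofReal ((1 + T.Cd) ^ 2) * μ (T.cell 0 p) * μ F := by
        rw [← ENNReal.ofReal_mul (by positivity)]
        congr 2
        field_simp

lemma step_integral (p : ℕ) {g : Δ → ℝ≥0∞} (hg : Measurable g) :
    ∫⁻ x in T.cell 0 p, g (T.retMap x) ∂μ
      ≤ ENNReal.ofReal ((1 + T.Cd) ^ 2) * μ (T.cell 0 p) * (μ T.base)⁻¹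
        * ∫⁻ x in T.base, g x ∂μ := by
  haveI := T.isProb
  have hb0 : μ T.base ≠ 0 := T.base_pos.ne'
  have hbt : μ T.base ≠ ⊤ := measure_ne_top μ _
  set c : ℝ≥0∞ := ENNReal.ofReal ((1 + T.Cd) ^ 2) * μ (T.cell 0 p) * (μ T.base)⁻¹ with hcdef
  have hmap : Measure.map T.retMap (μ.restrict (T.cell 0 p)) ≤ c • μ.restrict T.base := by
    rw [Measure.le_iff]
    intro s hs
    rw [Measure.map_apply T.measurable_retMap hs,
      Measure.restrict_apply (hs.preimage T.measurable_retMap),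
      Measure.smul_apply, smul_eq_mul, Measure.restrict_apply hs]
    have hseteq : T.retMap ⁻¹' s ∩ T.cell 0 p
        = T.cell 0 p ∩ T.retMap ⁻¹' (s ∩ T.base) := by
      ext x
      simp only [Set.mem_inter_iff, Set.mem_preimage]
      exact ⟨fun ⟨h1, h2⟩ => ⟨h2, h1, T.retMap_mem_base x⟩, fun ⟨h1, h2, _⟩ => ⟨h2, h1⟩⟩
    rw [hseteq]
    have hone := T.one_step p (hs.inter T.measurableSet_base) Set.inter_subset_right
    rw [← ENNReal.le_div_iff_mul_le (Or.inl hb0) (Or.inl hbt)] at hone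
    refine hone.trans (le_of_eq ?_)
    rw [div_eq_mul_inv, hcdef]
    ring
  have heq : ∫⁻ x in T.cell 0 p, g (T.retMap x) ∂μ
      = ∫⁻ y, g y ∂(Measure.map T.retMap (μ.restrict (T.cell 0 p))) :=
    (lintegral_map hg T.measurable_retMap).symm
  rw [heq]
  calc ∫⁻ y, g y ∂(Measure.map T.retMap (μ.restrict (T.cell 0 p)))
      ≤ ∫⁻ y, g y ∂(c • μ.restrict T.base) := lintegral_mono' hmap le_rfl
    _ = c * ∫⁻ x in T.base, g x ∂μ := lintegral_smul_measure c g

/-- The exponential-weight Birkhoff product along the induced map. -/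
noncomputable def gm (lam : ℝ) (m : ℕ) (x : Δ) : ℝ≥0∞ :=
  ∏ i ∈ Finset.range (m + 1),
    ENNReal.ofReal (Real.exp (lam * (T.retTime (T.retMap^[i] x) : ℝ)))

lemma measurable_gm (lam : ℝ) (m : ℕ) : Measurable (T.gm lam m) := by
  apply Finset.measurable_prod
  intro i _
  have h1 : Measurable fun k : ℕ => ENNReal.ofReal (Real.exp (lam * (k : ℝ))) :=
    measurable_from_nat
  exact h1.comp (T.measurable_retTime.comp (T.measurable_retMap.iterate i))

/-- The exponential moment of the return time. -/
noncomputable def Mlam (lam : ℝ) : ℝ≥0∞ :=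
  ∑' p : ℕ, ENNReal.ofReal (Real.exp (lam * (T.r p : ℝ))) * μ (T.cell 0 p)

lemma lintegral_base_eq (f : Δ → ℝ≥0∞) :
    ∫⁻ x in T.base, f x ∂μ = ∑' p : ℕ, ∫⁻ x in T.cell 0 p, f x ∂μ := by
  have : T.base = ⋃ p, T.cell 0 p := rfl
  rw [this]
  exact lintegral_iUnion (fun p => T.cell_meas 0 p)
    (fun p q hpq => T.cell_disj 0 p 0 q (by simp [hpq])) f

lemma gm_succ (lam : ℝ) (m : ℕ) (x : Δ) :
    T.gm lam (m + 1) x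
      = ENNReal.ofReal (Real.exp (lam * (T.retTime x : ℝ))) * T.gm lam m (T.retMap x) := by
  have h : ∀ i : ℕ, T.retMap^[i + 1] x = T.retMap^[i] (T.retMap x) := fun i =>
    Function.iterate_succ_apply T.retMap i x
  rw [YoungTower.gm, YoungTower.gm, Finset.prod_range_succ']
  simp only [h, Function.iterate_zero_apply]
  exact mul_comm _ _

lemma Em_le (lam : ℝ) (m : ℕ) :
    ∫⁻ x in T.base, T.gm lam m x ∂μ
      ≤ (ENNReal.ofReal ((1 + T.Cd) ^ 2) * T.Mlam lam * (μ T.base)⁻¹) ^ m * T.Mlam lam := by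
  induction m with
  | zero =>
    rw [pow_zero, one_mul, T.lintegral_base_eq, YoungTower.Mlam]
    apply ENNReal.tsum_le_tsum
    intro p
    have hcongr : ∫⁻ x in T.cell 0 p, T.gm lam 0 x ∂μ
        = ∫⁻ _ in T.cell 0 p, ENNReal.ofReal (Real.exp (lam * (T.r p : ℝ))) ∂μ := by
      apply setLIntegral_congr_fun (T.cell_meas 0 p)
      intro x hx
      rw [YoungTower.gm]
      simp only [zero_add, Finset.prod_range_one, Function.iterate_zero_apply]
      rw [T.retTime_eq hx]
    rw [hcongr, setLIntegral_const]
  | succ m ih =>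
    set R : ℝ≥0∞ := ENNReal.ofReal ((1 + T.Cd) ^ 2) * T.Mlam lam * (μ T.base)⁻¹ with hR
    set I : ℝ≥0∞ := ∫⁻ x in T.base, T.gm lam m x ∂μ with hI
    have step : ∫⁻ x in T.base, T.gm lam (m + 1) x ∂μ ≤ R * I := by
      rw [T.lintegral_base_eq]
      have hterm : ∀ p : ℕ, ∫⁻ x in T.cell 0 p, T.gm lam (m + 1) x ∂μ
          ≤ ENNReal.ofReal (Real.exp (lam * (T.r p : ℝ))) * μ (T.cell 0 p)
            * (ENNReal.ofReal ((1 + T.Cd) ^ 2) * (μ T.base)⁻¹ * I) := by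
        intro p
        have hcongr : ∫⁻ x in T.cell 0 p, T.gm lam (m + 1) x ∂μ
            = ∫⁻ x in T.cell 0 p,
                ENNReal.ofReal (Real.exp (lam * (T.r p : ℝ))) * T.gm lam m (T.retMap x) ∂μ := by
          apply setLIntegral_congr_fun (T.cell_meas 0 p)
          intro x hx
          rw [T.gm_succ, T.retTime_eq hx]
        have hgmr : Measurable fun x => T.gm lam m (T.retMap x) :=
          (T.measurable_gm lam m).comp T.measurable_retMap
        rw [hcongr, lintegral_const_mul _ hgmr]
        calc ENNReal.ofReal (Real.exp (lam * (T.r p : ℝ)))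
              * ∫⁻ x in T.cell 0 p, T.gm lam m (T.retMap x) ∂μ
            ≤ ENNReal.ofReal (Real.exp (lam * (T.r p : ℝ)))
              * (ENNReal.ofReal ((1 + T.Cd) ^ 2) * μ (T.cell 0 p) * (μ T.base)⁻¹ * I) :=
              mul_le_mul_right (T.step_integral p (T.measurable_gm lam m)) _
          _ = ENNReal.ofReal (Real.exp (lam * (T.r p : ℝ))) * μ (T.cell 0 p)
              * (ENNReal.ofReal ((1 + T.Cd) ^ 2) * (μ T.base)⁻¹ * I) := by ring
      calc ∑' p : ℕ, ∫⁻ x in T.cell 0 p, T.gm lam (m + 1) x ∂μ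
          ≤ ∑' p : ℕ, ENNReal.ofReal (Real.exp (lam * (T.r p : ℝ))) * μ (T.cell 0 p)
            * (ENNReal.ofReal ((1 + T.Cd) ^ 2) * (μ T.base)⁻¹ * I) :=
            ENNReal.tsum_le_tsum hterm
        _ = T.Mlam lam * (ENNReal.ofReal ((1 + T.Cd) ^ 2) * (μ T.base)⁻¹ * I) :=
            ENNReal.tsum_mul_right
        _ = R * I := by rw [hR, YoungTower.Mlam]; ring
    calc ∫⁻ x in T.base, T.gm lam (m + 1) x ∂μ ≤ R * I := step
      _ ≤ R * (R ^ m * T.Mlam lam) := mul_le_mul_right ih _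
      _ = R ^ (m + 1) * T.Mlam lam := by ring

lemma Mlam_bound (lam C0 ρ : ℝ) (hC0 : 0 ≤ C0) (hρ0 : 0 < ρ) (htails : T.ExpTails C0 ρ) :
    T.Mlam lam ≤ ENNReal.ofReal (Real.exp lam * C0)
      * (1 - ENNReal.ofReal (Real.exp lam * ρ))⁻¹ := by
  classical
  set F : ℕ → ℕ → ℝ≥0∞ := fun t p =>
    if T.r p = t + 1 then
      ENNReal.ofReal (Real.exp (lam * ((t : ℝ) + 1))) * μ (T.cell t p) else 0 with hF
  have hFp : ∀ p : ℕ, ∑' t : ℕ, F t p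
      = ENNReal.ofReal (Real.exp (lam * (T.r p : ℝ))) * μ (T.cell 0 p) := by
    intro p
    have hrp := T.r_pos p
    rw [tsum_eq_single (T.r p - 1) ?side]
    · rw [hF]
      simp only
      rw [if_pos (by omega)]
      have hcast : ((T.r p - 1 : ℕ) : ℝ) + 1 = (T.r p : ℝ) := by
        have : (T.r p - 1) + 1 = T.r p := by omega
        exact_mod_cast congrArg (Nat.cast (R := ℝ)) this
      rw [hcast, T.measure_cell_eq (show T.r p - 1 < T.r p by omega)]
    case side =>
      intro t ht
      rw [hF]
      simp only
      rw [if_neg (by omega)]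
  have h1 : T.Mlam lam = ∑' t : ℕ, ∑' p : ℕ, F t p := by
    rw [YoungTower.Mlam, ← ENNReal.tsum_comm]
    exact tsum_congr fun p => (hFp p).symm
  have h2 : ∀ t : ℕ, ∑' p : ℕ, F t p
      ≤ ENNReal.ofReal (Real.exp (lam * ((t : ℝ) + 1))) * μ (T.level t) := by
    intro t
    have hsum : ∑' p : ℕ, μ (T.cell t p) = μ (T.level t) := by
      rw [YoungTower.level]
      exact (measure_iUnion
        (fun p q hpq => T.cell_disj t p t q (by simp [hpq]))
        (fun p => T.cell_meas t p)).symm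
    calc ∑' p : ℕ, F t p
        ≤ ∑' p : ℕ, ENNReal.ofReal (Real.exp (lam * ((t : ℝ) + 1))) * μ (T.cell t p) := by
          apply ENNReal.tsum_le_tsum
          intro p
          rw [hF]
          simp only
          split_ifs
          · exact le_rfl
          · exact zero_le
      _ = ENNReal.ofReal (Real.exp (lam * ((t : ℝ) + 1))) * μ (T.level t) := by
          rw [ENNReal.tsum_mul_left, hsum]
  have h3 : ∀ t : ℕ, ENNReal.ofReal (Real.exp (lam * ((t : ℝ) + 1))) * μ (T.level t)
      ≤ ENNReal.ofReal (Real.exp lam * C0) * ENNReal.ofReal (Real.exp lam * ρ) ^ t := by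
    intro t
    calc ENNReal.ofReal (Real.exp (lam * ((t : ℝ) + 1))) * μ (T.level t)
        ≤ ENNReal.ofReal (Real.exp (lam * ((t : ℝ) + 1))) * ENNReal.ofReal (C0 * ρ ^ t) :=
          mul_le_mul_right (htails t) _
      _ = ENNReal.ofReal (Real.exp (lam * ((t : ℝ) + 1)) * (C0 * ρ ^ t)) :=
          (ENNReal.ofReal_mul (Real.exp_nonneg _)).symm
      _ = ENNReal.ofReal ((Real.exp lam * C0) * (Real.exp lam * ρ) ^ t) := by
          congr 1
          have hexp : Real.exp (lam * ((t : ℝ) + 1)) = Real.exp lam ^ t * Real.exp lam := by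
            rw [show lam * ((t : ℝ) + 1) = (t : ℝ) * lam + lam by ring, Real.exp_add,
              Real.exp_nat_mul]
          rw [hexp, mul_pow]
          ring
      _ = ENNReal.ofReal (Real.exp lam * C0) * ENNReal.ofReal (Real.exp lam * ρ) ^ t := by
          rw [ENNReal.ofReal_mul (by positivity), ENNReal.ofReal_pow (by positivity)]
  calc T.Mlam lam = ∑' t : ℕ, ∑' p : ℕ, F t p := h1
    _ ≤ ∑' t : ℕ, ENNReal.ofReal (Real.exp lam * C0) * ENNReal.ofReal (Real.exp lam * ρ) ^ t :=
        ENNReal.tsum_le_tsum fun t => (h2 t).trans (h3 t)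
    _ = ENNReal.ofReal (Real.exp lam * C0) * ∑' t : ℕ, ENNReal.ofReal (Real.exp lam * ρ) ^ t :=
        ENNReal.tsum_mul_left
    _ = ENNReal.ofReal (Real.exp lam * C0) * (1 - ENNReal.ofReal (Real.exp lam * ρ))⁻¹ := by
        rw [ENNReal.tsum_geometric]

end YoungTower

/-- Exponential bound on the set of points with big Birkhoff sums of the return time
(bound on `μ(Γ_n)` in Lemma `lem_renouv_temp`): for every small enough `κ > 0`, the
measure of `{x ∈ Δ₀ : ∑_{0 ≤ i ≤ κ n} φ(U₀^i x) ≥ n/2}` is exponentially small in `n`. -/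
theorem return_time_large_deviations
    {Δ : Type*} [MeasurableSpace Δ] {μ : Measure Δ} {U : Δ → Δ}
    (T : YoungTower μ U)
    (C0 ρ : ℝ) (hC0 : 0 < C0) (hρ0 : 0 < ρ) (hρ1 : ρ < 1) (htails : T.ExpTails C0 ρ) :
    ∃ κ₀ : ℝ, 0 < κ₀ ∧ ∀ κ : ℝ, 0 < κ → κ ≤ κ₀ →
      ∃ C' : ℝ, 0 < C' ∧ ∃ θ : ℝ, 0 < θ ∧ θ < 1 ∧ ∀ n : ℕ,
        μ {x : Δ | x ∈ T.base ∧
            (n : ℝ) / 2 ≤ ∑ i ∈ Finset.range (⌊κ * n⌋₊ + 1),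
              (T.retTime (T.retMap^[i] x) : ℝ)} ≤
          ENNReal.ofReal (C' * θ ^ n) := by
  haveI := T.isProb
  have hlogρ : Real.log ρ < 0 := Real.log_neg hρ0 hρ1
  set lam : ℝ := -Real.log ρ / 2 with hlam_def
  have hlam : 0 < lam := by rw [hlam_def]; linarith
  have hσlt : Real.exp lam * ρ < 1 := by
    have h1 : Real.exp lam * ρ = Real.exp (lam + Real.log ρ) := by
      rw [Real.exp_add, Real.exp_log hρ0]
    rw [h1]
    apply Real.exp_lt_one_iff.mpr
    rw [hlam_def]
    linarith
  set Mb : ℝ≥0∞ := ENNReal.ofReal (Real.exp lam * C0)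
    * (1 - ENNReal.ofReal (Real.exp lam * ρ))⁻¹ with hMb
  have hM : T.Mlam lam ≤ Mb := T.Mlam_bound lam C0 ρ hC0.le hρ0 htails
  have hq1 : ENNReal.ofReal (Real.exp lam * ρ) < 1 := ENNReal.ofReal_lt_one.mpr hσlt
  have hMbt : Mb ≠ ⊤ := by
    apply ENNReal.mul_ne_top ENNReal.ofReal_ne_top
    rw [Ne, ENNReal.inv_eq_top]
    intro h
    rw [tsub_eq_zero_iff_le] at h
    exact absurd h (not_le.mpr hq1)
  have hb0 : μ T.base ≠ 0 := T.base_pos.ne'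
  have hbinv : (μ T.base)⁻¹ ≠ ⊤ := ENNReal.inv_ne_top.mpr hb0
  set D : ℝ≥0∞ := ENNReal.ofReal ((1 + T.Cd) ^ 2) with hD
  set R : ℝ≥0∞ := D * Mb * (μ T.base)⁻¹ with hRdef
  have hRt : R ≠ ⊤ :=
    ENNReal.mul_ne_top (ENNReal.mul_ne_top ENNReal.ofReal_ne_top hMbt) hbinv
  set K : ℝ := max 1 R.toReal with hKdef
  have hK1 : (1 : ℝ) ≤ K := le_max_left _ _
  have hK0 : (0 : ℝ) < K := by linarith
  have hRK : R ≤ ENNReal.ofReal K := by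
    rw [← ENNReal.ofReal_toReal hRt]
    exact ENNReal.ofReal_le_ofReal (le_max_right _ _)
  set Mr : ℝ := max 1 Mb.toReal with hMrdef
  have hMr1 : (1 : ℝ) ≤ Mr := le_max_left _ _
  have hMbMr : Mb ≤ ENNReal.ofReal Mr := by
    rw [← ENNReal.ofReal_toReal hMbt]
    exact ENNReal.ofReal_le_ofReal (le_max_right _ _)
  have hlogK : 0 ≤ Real.log K := Real.log_nonneg hK1
  refine ⟨lam / (4 * (Real.log K + 1)), by positivity, ?_⟩
  intro κ hκ hκκ₀
  refine ⟨Mr, by linarith, Real.exp (-(lam / 4)), Real.exp_pos _,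
    Real.exp_lt_one_iff.mpr (by linarith), ?_⟩
  intro n
  set m : ℕ := ⌊κ * (n : ℝ)⌋₊ with hm
  set ε : ℝ≥0∞ := ENNReal.ofReal (Real.exp (lam * ((n : ℝ) / 2))) with hε
  have hε0 : ε ≠ 0 := (ENNReal.ofReal_pos.mpr (Real.exp_pos _)).ne'
  have hεt : ε ≠ ⊤ := ENNReal.ofReal_ne_top
  set Γ : Set Δ := {x : Δ | x ∈ T.base ∧
      (n : ℝ) / 2 ≤ ∑ i ∈ Finset.range (m + 1), (T.retTime (T.retMap^[i] x) : ℝ)} with hΓ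
  have hgmval : ∀ x : Δ, T.gm lam m x = ENNReal.ofReal
      (Real.exp (lam * ∑ i ∈ Finset.range (m + 1), (T.retTime (T.retMap^[i] x) : ℝ))) := by
    intro x
    rw [YoungTower.gm, Finset.mul_sum, Real.exp_sum, ENNReal.ofReal_prod_of_nonneg]
    intro i _
    exact (Real.exp_pos _).le
  have hsub : Γ ⊆ {x : Δ | ε ≤ T.gm lam m x} := by
    rintro x ⟨hxb, hxs⟩
    show ε ≤ T.gm lam m x
    rw [hgmval x, hε]
    apply ENNReal.ofReal_le_ofReal
    apply Real.exp_le_exp.mpr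
    exact mul_le_mul_of_nonneg_left hxs hlam.le
  have hmar := mul_meas_ge_le_lintegral₀ (μ := μ.restrict T.base)
    ((T.measurable_gm lam m).aemeasurable) ε
  have hμΓ : μ Γ ≤ (μ.restrict T.base) {x : Δ | ε ≤ T.gm lam m x} := by
    rw [Measure.restrict_apply' T.measurableSet_base]
    apply measure_mono
    intro x hx
    exact ⟨hsub hx, hx.1⟩
  have hchain : ε * μ Γ ≤ ENNReal.ofReal K ^ m * ENNReal.ofReal Mr := by
    have h1 : ε * μ Γ ≤ ∫⁻ x in T.base, T.gm lam m x ∂μ :=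
      (mul_le_mul_right hμΓ ε).trans hmar
    refine h1.trans ((T.Em_le lam m).trans ?_)
    have hRM : D * T.Mlam lam * (μ T.base)⁻¹ ≤ ENNReal.ofReal K := by
      refine le_trans ?_ hRK
      rw [hRdef]
      exact mul_le_mul_left (mul_le_mul_right hM D) _
    exact mul_le_mul' (pow_le_pow_left' hRM m) (hM.trans hMbMr)
  have hdiv : μ Γ ≤ ENNReal.ofReal K ^ m * ENNReal.ofReal Mr / ε := by
    rw [ENNReal.le_div_iff_mul_le (Or.inl hε0) (Or.inl hεt), mul_comm]
    exact hchain
  have heq2 : ENNReal.ofReal (K ^ m * Mr / Real.exp (lam * ((n : ℝ) / 2)))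
      = ENNReal.ofReal K ^ m * ENNReal.ofReal Mr / ε := by
    rw [ENNReal.ofReal_div_of_pos (Real.exp_pos _),
      ENNReal.ofReal_mul (by positivity), ENNReal.ofReal_pow hK0.le, ← hε]
  -- real-number estimate
  have hn0 : (0 : ℝ) ≤ (n : ℝ) := Nat.cast_nonneg n
  have hmle : (m : ℝ) ≤ κ * (n : ℝ) := Nat.floor_le (by positivity)
  have hmκ₀ : (m : ℝ) ≤ lam / (4 * (Real.log K + 1)) * (n : ℝ) :=
    hmle.trans (mul_le_mul_of_nonneg_right hκκ₀ hn0)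
  have hcpos : (0 : ℝ) ≤ lam / (4 * (Real.log K + 1)) := by positivity
  have hexp_bound : (m : ℝ) * Real.log K ≤ lam / 4 * (n : ℝ) := by
    have h1 : (m : ℝ) * Real.log K
        ≤ lam / (4 * (Real.log K + 1)) * (n : ℝ) * Real.log K :=
      mul_le_mul_of_nonneg_right hmκ₀ hlogK
    refine h1.trans ?_
    have hc : lam / (4 * (Real.log K + 1)) * (4 * (Real.log K + 1)) = lam :=
      div_mul_cancel₀ _ (by positivity)
    nlinarith [mul_nonneg hcpos hn0, hc]
  have hKm : (K : ℝ) ^ m = Real.exp ((m : ℝ) * Real.log K) := by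
    rw [Real.exp_nat_mul, Real.exp_log hK0]
  have hreal : K ^ m * Mr / Real.exp (lam * ((n : ℝ) / 2))
      ≤ Mr * Real.exp (-(lam / 4)) ^ n := by
    calc K ^ m * Mr / Real.exp (lam * ((n : ℝ) / 2))
        = Mr * (Real.exp ((m : ℝ) * Real.log K) / Real.exp (lam * ((n : ℝ) / 2))) := by
          rw [hKm]; ring
      _ = Mr * Real.exp ((m : ℝ) * Real.log K - lam * ((n : ℝ) / 2)) := by
          rw [Real.exp_sub]
      _ ≤ Mr * Real.exp ((n : ℝ) * -(lam / 4)) := by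
          apply mul_le_mul_of_nonneg_left _ (by linarith : (0 : ℝ) ≤ Mr)
          apply Real.exp_le_exp.mpr
          nlinarith [hexp_bound]
      _ = Mr * Real.exp (-(lam / 4)) ^ n := by rw [Real.exp_nat_mul]
  calc μ Γ ≤ ENNReal.ofReal K ^ m * ENNReal.ofReal Mr / ε := hdiv
    _ = ENNReal.ofReal (K ^ m * Mr / Real.exp (lam * ((n : ℝ) / 2))) := heq2.symm
    _ ≤ ENNReal.ofReal (Mr * Real.exp (-(lam / 4)) ^ n) := ENNReal.ofReal_le_ofReal hreal
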